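/- Let H be a hypergraph with an Euler family F and incidence graph G, and let G_F be the subgraph of G corresponding to F. If G1 is a nontrivial connected component of G_F, then at least two v-vertices of G1 are not cut vertices of G_F. Furthermore, if G1 contains a cycle of length 2k, then at least k v-vertices of G1 are not cut vertices of G_F. -/

import Mathlib

open scoped Classical

/-- A hypergraph: a finite nonempty vertex type `V`, a finite index type `E` of
edges (so that repeated edges are allowed, as in a multiset of edges), and a map
`mem` assigning to each edge the finite set of its vertices. -/
structure HGraph where
  V : Type
  E : Type
  [fintypeV : Fintype V]
  [fintypeE : Fintype E]
  [nonemptyV : Nonempty V]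
  mem : E → Finset V

attribute [instance] HGraph.fintypeV HGraph.fintypeE HGraph.nonemptyV

namespace HGraph

/-- A walk `v₀ e₁ v₁ e₂ … e_k v_k` in a hypergraph: consecutive anchors are
distinct and both lie in the connecting edge. -/
structure Walk (H : HGraph) where
  k : ℕ
  vtx : Fin (k + 1) → H.V
  edge : Fin k → H.E
  mem_left : ∀ i : Fin k, vtx i.castSucc ∈ H.mem (edge i)
  mem_right : ∀ i : Fin k, vtx i.succ ∈ H.mem (edge i)
  ne : ∀ i : Fin k, vtx i.castSucc ≠ vtx i.succ

/-- A trail is a walk with pairwise distinct edges. -/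
def Walk.IsTrail {H : HGraph} (W : H.Walk) : Prop :=
  Function.Injective W.edge

/-- A closed walk: `v₀ = v_k` and `k ≥ 2`. -/
def Walk.IsClosed {H : HGraph} (W : H.Walk) : Prop :=
  W.vtx 0 = W.vtx (Fin.last W.k) ∧ 2 ≤ W.k

def Walk.IsClosedTrail {H : HGraph} (W : H.Walk) : Prop :=
  W.IsTrail ∧ W.IsClosed

/-- The anchors of a walk. -/
def Walk.anchors {H : HGraph} (W : H.Walk) : Set H.V := Set.range W.vtx

/-- The set of edges traversed by a walk. -/
def Walk.edgeSet {H : HGraph} (W : H.Walk) : Set H.E := Set.range W.edge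

/-- An Euler tour: a closed trail traversing every edge exactly once. -/
def IsEulerTour (H : HGraph) (W : H.Walk) : Prop :=
  W.IsClosedTrail ∧ Function.Bijective W.edge

def HasEulerTour (H : HGraph) : Prop := ∃ W : H.Walk, H.IsEulerTour W

/-- A hypergraph is eulerian if it has no edges or admits an Euler tour. -/
def IsEulerian (H : HGraph) : Prop := IsEmpty H.E ∨ H.HasEulerTour

/-- An Euler family: a set of pairwise anchor-disjoint, edge-disjoint closed
trails jointly traversing every edge exactly once. -/
def IsEulerFamily (H : HGraph) (F : Set H.Walk) : Prop :=
  (∀ W ∈ F, W.IsClosedTrail) ∧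
  (∀ W ∈ F, ∀ W' ∈ F, W ≠ W' →
    Disjoint W.anchors W'.anchors ∧ Disjoint W.edgeSet W'.edgeSet) ∧
  (∀ e : H.E, ∃ W ∈ F, e ∈ W.edgeSet)

/-- A hypergraph is quasi-eulerian if it has no edges or admits an Euler family. -/
def IsQuasiEulerian (H : HGraph) : Prop :=
  IsEmpty H.E ∨ ∃ F : Set H.Walk, H.IsEulerFamily F

/-- A minimum Euler family: one with the fewest components. -/
def IsMinEulerFamily (H : HGraph) (F : Set H.Walk) : Prop :=
  H.IsEulerFamily F ∧ ∀ F' : Set H.Walk, H.IsEulerFamily F' → F.ncard ≤ F'.ncard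

/-- `H` is `k`-uniform if each edge has exactly `k` vertices. -/
def IsUniform (H : HGraph) (k : ℕ) : Prop := ∀ e : H.E, (H.mem e).card = k

/-- A covering `k`-hypergraph (`k ≥ 3`): a nonempty `k`-uniform hypergraph in
which every `(k-1)`-subset of the vertex set lies in at least one edge. -/
def IsCovering (H : HGraph) (k : ℕ) : Prop :=
  3 ≤ k ∧ Nonempty H.E ∧ H.IsUniform k ∧
    ∀ S : Finset H.V, S.card = k - 1 → ∃ e : H.E, S ⊆ H.mem e

/-- The incidence graph of a hypergraph: the bipartite simple graph on
`V ⊕ E` joining `v` and `e` exactly when `v ∈ e`. -/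
def incidenceGraph (H : HGraph) : SimpleGraph (H.V ⊕ H.E) where
  Adj x y :=
    (∃ v e, x = Sum.inl v ∧ y = Sum.inr e ∧ v ∈ H.mem e) ∨
    (∃ v e, x = Sum.inr e ∧ y = Sum.inl v ∧ v ∈ H.mem e)
  symm := by
    refine ⟨?_⟩
    rintro x y (⟨v, e, rfl, rfl, h⟩ | ⟨v, e, rfl, rfl, h⟩)
    · exact Or.inr ⟨v, e, rfl, rfl, h⟩
    · exact Or.inl ⟨v, e, rfl, rfl, h⟩
  loopless := by
    refine ⟨?_⟩
    rintro x (⟨v, e, rfl, h, -⟩ | ⟨v, e, rfl, h, -⟩) <;> exact absurd h (by simp)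

/-- `v` and `e` appear consecutively in some trail of the family `F`. -/
def ConsecIn (H : HGraph) (F : Set H.Walk) (v : H.V) (e : H.E) : Prop :=
  ∃ W ∈ F, ∃ i : Fin W.k, W.edge i = e ∧ (W.vtx i.castSucc = v ∨ W.vtx i.succ = v)

/-- The spanning subgraph of the incidence graph corresponding to an Euler
family `F`: its edges are the incident pairs `ve` consecutive in some trail of `F`. -/
def eulerSubgraph (H : HGraph) (F : Set H.Walk) : SimpleGraph (H.V ⊕ H.E) where
  Adj x y :=
    (∃ v e, x = Sum.inl v ∧ y = Sum.inr e ∧ H.ConsecIn F v e) ∨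
    (∃ v e, x = Sum.inr e ∧ y = Sum.inl v ∧ H.ConsecIn F v e)
  symm := by
    refine ⟨?_⟩
    rintro x y (⟨v, e, rfl, rfl, h⟩ | ⟨v, e, rfl, rfl, h⟩)
    · exact Or.inr ⟨v, e, rfl, rfl, h⟩
    · exact Or.inl ⟨v, e, rfl, rfl, h⟩
  loopless := by
    refine ⟨?_⟩
    rintro x (⟨v, e, rfl, h, -⟩ | ⟨v, e, rfl, h, -⟩) <;> exact absurd h (by simp)

end HGraph

/-- The degree of a vertex of a simple graph (number of neighbours). -/
noncomputable def sdeg {α : Type*} (G : SimpleGraph α) (x : α) : ℕ :=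
  (G.neighborSet x).ncard

/-- A connected component of a simple graph is nontrivial if it contains an edge. -/
def NontrivComp {α : Type*} (G : SimpleGraph α) (c : G.ConnectedComponent) : Prop :=
  ∃ x y, G.Adj x y ∧ G.connectedComponentMk x = c

/-- The number of nontrivial connected components of a simple graph. -/
noncomputable def ntComps {α : Type*} (G : SimpleGraph α) : ℕ :=
  {c : G.ConnectedComponent | NontrivComp G c}.ncard

/-- A cut vertex of a simple graph: a vertex whose deletion increases the number
of connected components, i.e. some two vertices distinct from it are joined by a
walk but by no walk avoiding it. -/
def IsCutVtx {α : Type*} (G : SimpleGraph α) (v : α) : Prop :=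
  ∃ x y, x ≠ v ∧ y ≠ v ∧ G.Reachable x y ∧ ¬ ∃ p : G.Walk x y, v ∉ p.support

/-- An `F`-interchanging cycle: a cycle of the incidence graph such that every
e-vertex on it is incident in `G_F` with exactly one edge of the cycle. -/
def IsInterchanging (H : HGraph) (F : Set H.Walk) {x : H.V ⊕ H.E}
    (C : (H.incidenceGraph).Walk x x) : Prop :=
  C.IsCycle ∧ ∀ e : H.E, (Sum.inr e : H.V ⊕ H.E) ∈ C.support →
    ∃! s : Sym2 (H.V ⊕ H.E),
      s ∈ C.edges ∧ (Sum.inr e : H.V ⊕ H.E) ∈ s ∧ s ∈ (H.eulerSubgraph F).edgeSet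

/-- The symmetric difference of a simple graph with a set of potential edges. -/
def symmDiffEdges {α : Type*} (G : SimpleGraph α) (s : Set (Sym2 α)) : SimpleGraph α :=
  SimpleGraph.fromEdgeSet (symmDiff G.edgeSet s)

/-- An `F`-diminishing cycle: an `F`-interchanging cycle `C` such that
`G_F Δ C` has fewer nontrivial connected components than `G_F`. -/
def IsDiminishing (H : HGraph) (F : Set H.Walk) {x : H.V ⊕ H.E}
    (C : (H.incidenceGraph).Walk x x) : Prop :=
  IsInterchanging H F C ∧
    ntComps (symmDiffEdges (H.eulerSubgraph F) {s | s ∈ C.edges}) <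
      ntComps (H.eulerSubgraph F)

section CorAux

open SimpleGraph

variable {α : Type} {G : SimpleGraph α}

/-- `u` and `w` are joined by a walk avoiding `v`. -/
def Avoid (G : SimpleGraph α) (v u w : α) : Prop := ∃ p : G.Walk u w, v ∉ p.support

lemma Avoid.reachable {v u w : α} (h : Avoid G v u w) : G.Reachable u w := ⟨h.choose⟩

lemma avoid_refl {v u : α} (h : u ≠ v) : Avoid G v u u :=
  ⟨SimpleGraph.Walk.nil, by simp [h.symm]⟩

lemma Avoid.symm {v u w : α} (h : Avoid G v u w) : Avoid G v w u := by
  obtain ⟨p, hp⟩ := h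
  exact ⟨p.reverse, by simpa [Walk.support_reverse] using hp⟩

lemma Avoid.trans {v a b c : α} (h1 : Avoid G v a b) (h2 : Avoid G v b c) :
    Avoid G v a c := by
  obtain ⟨p, hp⟩ := h1; obtain ⟨q, hq⟩ := h2
  refine ⟨p.append q, ?_⟩
  rw [Walk.support_append, List.mem_append]
  rintro (h | h)
  · exact hp h
  · exact hq (List.tail_subset _ h)

lemma avoid_of_adj {v u w : α} (h : G.Adj u w) (h1 : v ≠ u) (h2 : v ≠ w) :
    Avoid G v u w :=
  ⟨Walk.cons h Walk.nil, by simp [h1, h2]⟩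

lemma Avoid.ne_left {v u w : α} (h : Avoid G v u w) : u ≠ v := by
  obtain ⟨p, hp⟩ := h
  intro he; exact hp (he ▸ p.start_mem_support)

lemma Avoid.ne_right {v u w : α} (h : Avoid G v u w) : w ≠ v := by
  obtain ⟨p, hp⟩ := h
  intro he; exact hp (he ▸ p.end_mem_support)

lemma exists_adj_of_reachable_ne {x y : α} (h : G.Reachable x y) (hne : x ≠ y) :
    ∃ s, G.Adj x s := by
  obtain ⟨p⟩ := h
  cases p with
  | nil => exact absurd rfl hne
  | cons h q => exact ⟨_, h⟩

lemma support_take_drop {u w x : α} (p : G.Walk u w) (h : x ∈ p.support) :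
    p.support = (p.takeUntil x h).support ++ (p.dropUntil x h).support.tail := by
  conv_lhs => rw [← Walk.take_spec p h]
  exact Walk.support_append _ _

lemma length_take_drop {u w x : α} (p : G.Walk u w) (h : x ∈ p.support) :
    (p.takeUntil x h).length + (p.dropUntil x h).length = p.length := by
  conv_rhs => rw [← Walk.take_spec p h]
  exact (Walk.length_append _ _).symm

lemma end_mem_support_tail {u w : α} (p : G.Walk u w) (h : p.length ≠ 0) :
    w ∈ p.support.tail := by
  cases p with
  | nil => simp at h
  | cons h q => simpa using q.end_mem_support

lemma length_pos_of_ne {u w : α} (p : G.Walk u w) (h : u ≠ w) : 1 ≤ p.length := by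
  rcases Nat.eq_zero_or_pos p.length with h0 | h0
  · exact absurd (Walk.eq_of_length_eq_zero h0) h
  · exact h0

lemma dist_lt_and_avoid {a w b : α} (hr : G.Reachable a b) (haw : a ≠ w) (hwb : w ≠ b)
    (hall : ∀ p : G.Walk a b, w ∈ p.support) :
    G.dist a w < G.dist a b ∧ Avoid G a w b := by
  obtain ⟨p, hp⟩ := hr.exists_walk_length_eq_dist
  have hw := hall p
  have hlen := length_take_drop p hw
  have h1 : G.dist a w ≤ (p.takeUntil w hw).length := SimpleGraph.dist_le _
  have h2 : 1 ≤ (p.dropUntil w hw).length := length_pos_of_ne _ hwb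
  have hraw : G.Reachable a w := ⟨p.takeUntil w hw⟩
  have h3 : 0 < G.dist a w := hraw.pos_dist_of_ne haw
  refine ⟨by omega, ?_⟩
  have hand : a ∉ (p.dropUntil w hw).support := by
    intro had
    have hq : G.dist a b ≤ ((p.dropUntil w hw).dropUntil a had).length :=
      SimpleGraph.dist_le _
    have hq2 := length_take_drop (p.dropUntil w hw) had
    omega
  exact ⟨p.dropUntil w hw, hand⟩

lemma avoid_of_path {a b : α} (q : G.Walk a b) (hq : q.support.Nodup)
    {u u' : α} (hu : u ∈ q.support) (hu' : u' ∈ q.support) (hub : u ≠ b) (hu'b : u' ≠ b) :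
    Avoid G b u u' := by
  set T := q.takeUntil u hu with hT
  set D := q.dropUntil u hu with hD
  have hdecomp : q.support = T.support ++ D.support.tail := support_take_drop q hu
  have hdisj : T.support.Disjoint D.support.tail := by
    have := hdecomp ▸ hq
    exact List.disjoint_of_nodup_append this
  have hDnodup : D.support.Nodup := by
    have htail : D.support.tail.Nodup := (List.nodup_append.mp (hdecomp ▸ hq)).2.1
    have huT : u ∈ T.support := T.end_mem_support
    have : u ∉ D.support.tail := fun hmem => hdisj huT hmem
    rw [D.support_eq_cons]
    exact List.nodup_cons.mpr ⟨this, htail⟩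
  by_cases hu'D : u' ∈ D.support
  · refine ⟨D.takeUntil u' hu'D, ?_⟩
    intro hbs
    have hdecomp2 : D.support =
        (D.takeUntil u' hu'D).support ++ (D.dropUntil u' hu'D).support.tail :=
      support_take_drop D hu'D
    have hbtail : b ∈ (D.dropUntil u' hu'D).support.tail := by
      refine end_mem_support_tail _ ?_
      intro h0
      exact hu'b (Walk.eq_of_length_eq_zero h0)
    exact (List.disjoint_of_nodup_append (hdecomp2 ▸ hDnodup)) hbs hbtail
  · have hu'T : u' ∈ T.support := by
      rcases (List.mem_append.mp (hdecomp ▸ hu')) with h | h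
      · exact h
      · exact absurd (List.tail_subset _ h) hu'D
    have hbT : b ∉ T.support := by
      intro hbT
      have hbD : b ∈ D.support.tail := by
        have : b ∈ D.support := D.end_mem_support
        rw [D.support_eq_cons, List.mem_cons] at this
        rcases this with h | h
        · exact absurd h.symm hub
        · exact h
      exact hdisj hbT hbD
    refine ⟨(T.dropUntil u' hu'T).reverse, ?_⟩
    rw [Walk.support_reverse, List.mem_reverse]
    intro h
    exact hbT (T.support_dropUntil_subset hu'T h)

lemma cycle_avoid {x v u u' : α} (C : G.Walk x x) (hC : C.IsCycle)
    (hv : v ∈ C.support) (hu : u ∈ C.support) (hu' : u' ∈ C.support)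
    (huv : u ≠ v) (hu'v : u' ≠ v) : Avoid G v u u' := by
  have hlen : C.length ≠ 0 := by have := hC.three_le_length; omega
  have htail : ∀ y, y ∈ C.support → y ∈ C.support.tail := by
    intro y hy
    rw [C.support_eq_cons, List.mem_cons] at hy
    rcases hy with rfl | hy
    · exact end_mem_support_tail C hlen
    · exact hy
  set C' := C.rotate v hv with hC'def
  have hC' : C'.IsCycle := hC.rotate hv
  have hperm : List.Perm C'.support.tail C.support.tail := (Walk.support_rotate C v hv).perm
  have hmem' : ∀ y, y ∈ C.support → y ∈ C'.support.tail := fun y hy =>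
    hperm.mem_iff.mpr (htail y hy)
  cases hq : C' with
  | nil => exact absurd (hq ▸ hC').ne_nil (by simp)
  | cons hadj q =>
    have hqsupp : q.support = C'.support.tail := by rw [hq, Walk.support_cons]; rfl
    have hnodup : q.support.Nodup := hqsupp ▸ hC'.support_nodup
    have hu2 : u ∈ q.support := hqsupp ▸ hmem' u hu
    have hu'2 : u' ∈ q.support := hqsupp ▸ hmem' u' hu'
    exact avoid_of_path q hnodup hu2 hu'2 huv hu'v

lemma support_getElem {a b : α} (p : G.Walk a b) :
    ∀ (i : ℕ) (h : i < p.support.length), p.support[i] = p.getVert i := by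
  induction p with
  | nil =>
      intro i h
      simp only [Walk.support_nil, List.length_singleton] at h
      interval_cases i
      simp [Walk.support_nil, Walk.getVert_zero]
  | cons hadj q ih =>
      intro i h
      cases i with
      | zero => simp [Walk.support_cons, Walk.getVert_zero]
      | succ n =>
          have h' : n < q.support.length := by
            simpa [Walk.support_cons] using h
          simp [Walk.support_cons, Walk.getVert_cons_succ, ih n h']

lemma getVert_mem_support {a b : α} (p : G.Walk a b) (i : ℕ) :
    p.getVert i ∈ p.support := by
  rcases le_or_gt i p.length with h | h
  · rcases lt_or_eq_of_le h with h | h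
    · rw [← support_getElem p i (by rw [Walk.length_support]; omega)]
      exact List.getElem_mem _
    · rw [h, Walk.getVert_length]; exact p.end_mem_support
  · rw [Walk.getVert_of_length_le p h.le]; exact p.end_mem_support

lemma getVert_injOn_tail {x : α} (C : G.Walk x x) (hC : C.support.tail.Nodup)
    {i j : ℕ} (hi1 : 1 ≤ i) (hiL : i ≤ C.length) (hj1 : 1 ≤ j) (hjL : j ≤ C.length)
    (hne : i ≠ j) : C.getVert i ≠ C.getVert j := by
  have hlen : C.support.tail.length = C.length := by
    rw [List.length_tail, Walk.length_support]; omega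
  obtain ⟨i', rfl⟩ : ∃ i', i = i' + 1 := ⟨i - 1, by omega⟩
  obtain ⟨j', rfl⟩ : ∃ j', j = j' + 1 := ⟨j - 1, by omega⟩
  have hi' : i' < C.support.tail.length := by omega
  have hj' : j' < C.support.tail.length := by omega
  have hgi : C.support.tail[i'] = C.getVert (i' + 1) := by
    rw [List.getElem_tail]
    exact support_getElem C (i' + 1) (by rw [Walk.length_support]; omega)
  have hgj : C.support.tail[j'] = C.getVert (j' + 1) := by
    rw [List.getElem_tail]
    exact support_getElem C (j' + 1) (by rw [Walk.length_support]; omega)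
  intro heq
  rw [← hgi, ← hgj] at heq
  have := (hC.getElem_inj_iff).mp heq
  omega

end CorAux


section HyperAux

open SimpleGraph

variable {H : HGraph} {F : Set H.Walk}

lemma evtx {e : H.E} {t : H.V ⊕ H.E}
    (hadj : (H.eulerSubgraph F).Adj (Sum.inr e) t) :
    ∃ u1 u2 : H.V, u1 ≠ u2 ∧ (H.eulerSubgraph F).Adj (Sum.inr e) (Sum.inl u1) ∧
      (H.eulerSubgraph F).Adj (Sum.inr e) (Sum.inl u2) := by
  have h : (∃ v e', (Sum.inr e : H.V ⊕ H.E) = Sum.inl v ∧ t = Sum.inr e' ∧ H.ConsecIn F v e') ∨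
      (∃ v e', (Sum.inr e : H.V ⊕ H.E) = Sum.inr e' ∧ t = Sum.inl v ∧ H.ConsecIn F v e') := hadj
  rcases h with ⟨v, e', h1, -, -⟩ | ⟨v, e', h1, h2, hc⟩
  · exact absurd h1 (by simp)
  · obtain rfl : e = e' := by
      injection h1 with h
    obtain ⟨W, hW, i, hie, hor⟩ := hc
    refine ⟨W.vtx i.castSucc, W.vtx i.succ, W.ne i, ?_, ?_⟩
    · exact Or.inr ⟨_, e, rfl, rfl, W, hW, i, hie, Or.inl rfl⟩
    · exact Or.inr ⟨_, e, rfl, rfl, W, hW, i, hie, Or.inr rfl⟩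

lemma near_vertex (z w' : H.V ⊕ H.E) (hz : ∃ s, (H.eulerSubgraph F).Adj z s) (hzw : z ≠ w') :
    ∃ u : H.V, (Sum.inl u : H.V ⊕ H.E) ≠ w' ∧
      (Sum.inl u = z ∨ (H.eulerSubgraph F).Adj z (Sum.inl u)) := by
  obtain ⟨s, hs⟩ := hz
  cases z with
  | inl u => exact ⟨u, hzw, Or.inl rfl⟩
  | inr e =>
    obtain ⟨u1, u2, hne, h1, h2⟩ := evtx hs
    by_cases h : (Sum.inl u1 : H.V ⊕ H.E) = w'
    · refine ⟨u2, ?_, Or.inr h2⟩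
      rw [← h]
      simp [hne.symm]
    · exact ⟨u1, h, Or.inr h1⟩

lemma cut_far {a w : H.V ⊕ H.E} (hr : (H.eulerSubgraph F).Reachable a w)
    (hcut : IsCutVtx (H.eulerSubgraph F) w) :
    ∃ u : H.V, (H.eulerSubgraph F).Reachable a (Sum.inl u) ∧
      (H.eulerSubgraph F).dist a w < (H.eulerSubgraph F).dist a (Sum.inl u) ∧
      (a ≠ w → Avoid (H.eulerSubgraph F) a w (Sum.inl u)) := by
  obtain ⟨x, y, hx, hy, hxy, hno⟩ := hcut
  have hnoav : ¬ Avoid (H.eulerSubgraph F) w x y := hno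
  have hxyne : x ≠ y := by rintro rfl; exact hnoav (avoid_refl hx)
  have hall : ∀ p : (H.eulerSubgraph F).Walk x y, w ∈ p.support := by
    intro p; by_contra hcon; exact hnoav ⟨p, hcon⟩
  have hrxw : (H.eulerSubgraph F).Reachable x w := by
    obtain ⟨p⟩ := hxy; exact ⟨p.takeUntil w (hall p)⟩
  have hryw : (H.eulerSubgraph F).Reachable y w := hxy.symm.trans hrxw
  by_cases haw : a = w
  · subst haw
    obtain ⟨u, hune, hcase⟩ := near_vertex x a (exists_adj_of_reachable_ne hxy hxyne) hx
    have hru : (H.eulerSubgraph F).Reachable a (Sum.inl u) := by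
      rcases hcase with heq | hadj
      · rw [heq]; exact hrxw.symm
      · exact hrxw.symm.trans hadj.reachable
    refine ⟨u, hru, ?_, fun hne => absurd rfl hne⟩
    rw [SimpleGraph.dist_self]
    exact hru.pos_dist_of_ne hune.symm
  · have hzch : ¬ Avoid (H.eulerSubgraph F) w a x ∨ ¬ Avoid (H.eulerSubgraph F) w a y := by
      by_contra hcon
      push_neg at hcon
      exact hnoav (hcon.1.symm.trans hcon.2)
    obtain ⟨z, hznav, hzne, hzr, hzadj⟩ :
        ∃ z, ¬ Avoid (H.eulerSubgraph F) w a z ∧ z ≠ w ∧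
          (H.eulerSubgraph F).Reachable w z ∧ (∃ s, (H.eulerSubgraph F).Adj z s) := by
      rcases hzch with h | h
      · exact ⟨x, h, hx, hrxw.symm, exists_adj_of_reachable_ne hxy hxyne⟩
      · exact ⟨y, h, hy, hryw.symm, exists_adj_of_reachable_ne hxy.symm hxyne.symm⟩
    obtain ⟨u, hune, hcase⟩ := near_vertex z w hzadj hzne
    have hnavu : ¬ Avoid (H.eulerSubgraph F) w a (Sum.inl u) := by
      rcases hcase with heq | hadj
      · rw [heq]; exact hznav
      · intro hav
        exact hznav (hav.trans (avoid_of_adj hadj.symm hune.symm hzne.symm))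
    have hru : (H.eulerSubgraph F).Reachable a (Sum.inl u) := by
      have hrz : (H.eulerSubgraph F).Reachable a z := hr.trans hzr
      rcases hcase with heq | hadj
      · rw [← heq] at hrz; exact hrz
      · exact hrz.trans hadj.reachable
    have hall2 : ∀ p : (H.eulerSubgraph F).Walk a (Sum.inl u), w ∈ p.support := by
      intro p
      by_contra hcon
      exact hnavu ⟨p, hcon⟩
    obtain ⟨h1, h2⟩ := dist_lt_and_avoid hru haw hune.symm hall2
    exact ⟨u, hru, h1, fun _ => h2⟩

lemma noncut_of_max {a : H.V ⊕ H.E} {S : Set H.V}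
    (hSr : ∀ u ∈ S, (H.eulerSubgraph F).Reachable a (Sum.inl u))
    (hcl : ∀ u ∈ S, ∀ u' : H.V, (H.eulerSubgraph F).Reachable a (Sum.inl u') →
      (Sum.inl u = a ∨ Avoid (H.eulerSubgraph F) a (Sum.inl u) (Sum.inl u')) → u' ∈ S)
    {w : H.V} (hw : w ∈ S)
    (hmax : ∀ u ∈ S, (H.eulerSubgraph F).dist a (Sum.inl u) ≤
      (H.eulerSubgraph F).dist a (Sum.inl w)) :
    ¬ IsCutVtx (H.eulerSubgraph F) (Sum.inl w) := by
  intro hcut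
  obtain ⟨u', hru', hdist, hav⟩ := cut_far (hSr w hw) hcut
  have hu'S : u' ∈ S := by
    by_cases haw : a = Sum.inl w
    · exact hcl w hw u' hru' (Or.inl haw.symm)
    · exact hcl w hw u' hru' (Or.inr (hav haw))
  exact absurd (hmax u' hu'S) (by omega)

end HyperAux

/-- Corollary 4.6: if `G1` is a nontrivial connected component of `G_F`, then at
least two v-vertices of `G1` are not cut vertices of `G_F`; moreover if `G1`
contains a cycle of length `2k`, then at least `k` v-vertices of `G1` are not
cut vertices of `G_F`. -/
theorem eulerSubgraph_noncut_vvertices (H : HGraph) (F : Set H.Walk)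
    (hF : H.IsEulerFamily F) (c : (H.eulerSubgraph F).ConnectedComponent)
    (hc : NontrivComp (H.eulerSubgraph F) c) :
    2 ≤ {v : H.V | (H.eulerSubgraph F).connectedComponentMk (Sum.inl v) = c ∧
          ¬ IsCutVtx (H.eulerSubgraph F) (Sum.inl v)}.ncard ∧
    ∀ (k : ℕ) (x : H.V ⊕ H.E) (C : (H.eulerSubgraph F).Walk x x),
      C.IsCycle → C.length = 2 * k →
      (H.eulerSubgraph F).connectedComponentMk x = c →
      k ≤ {v : H.V | (H.eulerSubgraph F).connectedComponentMk (Sum.inl v) = c ∧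
            ¬ IsCutVtx (H.eulerSubgraph F) (Sum.inl v)}.ncard := by
  classical
  letI : DecidableEq (H.V ⊕ H.E) := Classical.decEq _
  set N : Set H.V := {v : H.V | (H.eulerSubgraph F).connectedComponentMk (Sum.inl v) = c ∧
      ¬ IsCutVtx (H.eulerSubgraph F) (Sum.inl v)} with hNdef
  have hreachC : ∀ {b d : H.V ⊕ H.E},
      (H.eulerSubgraph F).connectedComponentMk b = c →
      (H.eulerSubgraph F).connectedComponentMk d = c →
      (H.eulerSubgraph F).Reachable b d := by
    intro b d hb hd
    exact (SimpleGraph.ConnectedComponent.eq).mp (hb.trans hd.symm)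
  constructor
  · -- Part 1: at least two non-cut v-vertices
    obtain ⟨x0, y0, hadj0, hcomp0⟩ := hc
    have hcomp0' : (H.eulerSubgraph F).connectedComponentMk y0 = c :=
      ((SimpleGraph.ConnectedComponent.eq).mpr hadj0.symm.reachable).trans hcomp0
    have hsh : (∃ v e, x0 = Sum.inl v ∧ y0 = Sum.inr e ∧ H.ConsecIn F v e) ∨
        (∃ v e, x0 = Sum.inr e ∧ y0 = Sum.inl v ∧ H.ConsecIn F v e) := hadj0
    obtain ⟨e, hecomp, t, het⟩ : ∃ e : H.E,
        (H.eulerSubgraph F).connectedComponentMk (Sum.inr e) = c ∧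
        ∃ t, (H.eulerSubgraph F).Adj (Sum.inr e) t := by
      rcases hsh with ⟨v, e, rfl, rfl, -⟩ | ⟨v, e, rfl, rfl, -⟩
      · exact ⟨e, hcomp0', Sum.inl v, hadj0.symm⟩
      · exact ⟨e, hcomp0, Sum.inl v, hadj0⟩
    obtain ⟨u1, u2, hu12, hadj1, hadj2⟩ := evtx het
    have hc1 : (H.eulerSubgraph F).connectedComponentMk (Sum.inl u1) = c :=
      ((SimpleGraph.ConnectedComponent.eq).mpr hadj1.symm.reachable).trans hecomp
    have hc2 : (H.eulerSubgraph F).connectedComponentMk (Sum.inl u2) = c :=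
      ((SimpleGraph.ConnectedComponent.eq).mpr hadj2.symm.reachable).trans hecomp
    set T : Set H.V := {v : H.V | (H.eulerSubgraph F).connectedComponentMk (Sum.inl v) = c}
      with hTdef
    have hcloT : ∀ (a : H.V ⊕ H.E), (H.eulerSubgraph F).connectedComponentMk a = c →
        ∀ u ∈ T, ∀ u' : H.V, (H.eulerSubgraph F).Reachable a (Sum.inl u') →
        (Sum.inl u = a ∨ Avoid (H.eulerSubgraph F) a (Sum.inl u) (Sum.inl u')) → u' ∈ T := by
      intro a ha u hu u' hr _
      exact ((SimpleGraph.ConnectedComponent.eq).mpr hr.symm).trans ha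
    have hTfin : T.Finite := Set.toFinite T
    obtain ⟨w1, hw1T, hmax1⟩ := Set.exists_max_image T
      (fun v => (H.eulerSubgraph F).dist (Sum.inl u1) (Sum.inl v)) hTfin ⟨u1, hc1⟩
    have hnc1 : ¬ IsCutVtx (H.eulerSubgraph F) (Sum.inl w1) :=
      noncut_of_max (fun u hu => hreachC hc1 hu) (hcloT _ hc1) hw1T hmax1
    obtain ⟨w2, hw2T, hmax2⟩ := Set.exists_max_image T
      (fun v => (H.eulerSubgraph F).dist (Sum.inl w1) (Sum.inl v)) hTfin ⟨u1, hc1⟩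
    have hnc2 : ¬ IsCutVtx (H.eulerSubgraph F) (Sum.inl w2) :=
      noncut_of_max (fun u hu => hreachC hw1T hu) (hcloT _ hw1T) hw2T hmax2
    obtain ⟨u', hu'T, hu'w1⟩ : ∃ u', u' ∈ T ∧ u' ≠ w1 := by
      by_cases h : u1 = w1
      · refine ⟨u2, hc2, ?_⟩
        rw [← h]
        exact hu12.symm
      · exact ⟨u1, hc1, h⟩
    have hne12 : w1 ≠ w2 := by
      intro heq
      have hru' : (H.eulerSubgraph F).Reachable (Sum.inl w1) (Sum.inl u') :=
        hreachC hw1T hu'T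
      have hpos : 0 < (H.eulerSubgraph F).dist (Sum.inl w1) (Sum.inl u') :=
        hru'.pos_dist_of_ne (by simpa using hu'w1.symm)
      have hle := hmax2 u' hu'T
      rw [← heq] at hle
      rw [SimpleGraph.dist_self] at hle
      omega
    calc (2:ℕ) = ({w1, w2} : Set H.V).ncard := (Set.ncard_pair hne12).symm
      _ ≤ N.ncard := by
          refine Set.ncard_le_ncard ?_ (Set.toFinite N)
          rintro v (rfl | rfl)
          · exact ⟨hw1T, hnc1⟩
          · exact ⟨hw2T, hnc2⟩
  · -- Part 2: a cycle of length 2k forces k non-cut v-vertices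
    intro k x C hcyc hlen hcompx
    have hvtx : ∀ i : Fin k, ∃ (v : H.V) (n : ℕ), 2*(i:ℕ)+1 ≤ n ∧ n ≤ 2*(i:ℕ)+2 ∧
        C.getVert n = Sum.inl v := by
      intro i
      have hik : (i:ℕ) < k := i.2
      have hilt : 2*(i:ℕ)+1 < C.length := by rw [hlen]; omega
      have hadj := C.adj_getVert_succ hilt
      have hsh : (∃ v e, C.getVert (2*(i:ℕ)+1) = Sum.inl v ∧
            C.getVert (2*(i:ℕ)+1+1) = Sum.inr e ∧ H.ConsecIn F v e) ∨
          (∃ v e, C.getVert (2*(i:ℕ)+1) = Sum.inr e ∧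
            C.getVert (2*(i:ℕ)+1+1) = Sum.inl v ∧ H.ConsecIn F v e) := hadj
      rcases hsh with ⟨v, e, h1, -, -⟩ | ⟨v, e, -, h2, -⟩
      · exact ⟨v, 2*(i:ℕ)+1, le_refl _, by omega, h1⟩
      · refine ⟨v, 2*(i:ℕ)+2, by omega, le_refl _, ?_⟩
        have he : 2*(i:ℕ)+1+1 = 2*(i:ℕ)+2 := by omega
        rw [← he]
        exact h2
    choose vv pos hpos1 hpos2 hvv using hvtx
    have hnd : C.support.tail.Nodup := hcyc.support_nodup
    have hposle : ∀ i : Fin k, pos i ≤ C.length := by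
      intro i
      have h2 := hpos2 i
      have hik : (i:ℕ) < k := i.2
      rw [hlen]; omega
    have hmem : ∀ i : Fin k, Sum.inl (vv i) ∈ C.support := by
      intro i; rw [← hvv i]; exact getVert_mem_support C (pos i)
    have hvvinj : ∀ i j : Fin k, i ≠ j → vv i ≠ vv j := by
      intro i j hij heq
      have h1 := hpos1 i; have h2 := hpos2 i; have h3 := hpos1 j; have h4 := hpos2 j
      have hijn : (i:ℕ) ≠ (j:ℕ) := fun h => hij (Fin.ext h)
      have hne := getVert_injOn_tail C hnd (show 1 ≤ pos i by omega) (hposle i)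
        (show 1 ≤ pos j by omega) (hposle j) (show pos i ≠ pos j by omega)
      rw [hvv i, hvv j, heq] at hne
      exact hne rfl
    have hcompv : ∀ i : Fin k,
        (H.eulerSubgraph F).connectedComponentMk (Sum.inl (vv i)) = c := by
      intro i
      have hrch : (H.eulerSubgraph F).Reachable x (Sum.inl (vv i)) :=
        ⟨C.takeUntil _ (hmem i)⟩
      exact ((SimpleGraph.ConnectedComponent.eq).mpr hrch.symm).trans hcompx
    have hsel2 : ∀ i : Fin k, ∃ u : H.V, u ∈ N ∧
        ((¬ IsCutVtx (H.eulerSubgraph F) (Sum.inl (vv i)) ∧ u = vv i) ∨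
         (IsCutVtx (H.eulerSubgraph F) (Sum.inl (vv i)) ∧
           ∀ t ∈ C.support, t ≠ Sum.inl (vv i) →
             ¬ Avoid (H.eulerSubgraph F) (Sum.inl (vv i)) (Sum.inl u) t)) := by
      intro i
      by_cases hcut : IsCutVtx (H.eulerSubgraph F) (Sum.inl (vv i))
      · have hcut2 := hcut
        obtain ⟨x1, y1, hx1, hy1, hr1, hno1⟩ := hcut2
        have hnoav1 : ¬ Avoid (H.eulerSubgraph F) (Sum.inl (vv i)) x1 y1 := hno1
        have hx1y1 : x1 ≠ y1 := by rintro rfl; exact hnoav1 (avoid_refl hx1)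
        have hall1 : ∀ p : (H.eulerSubgraph F).Walk x1 y1, Sum.inl (vv i) ∈ p.support := by
          intro p
          by_contra hcon
          exact hnoav1 ⟨p, hcon⟩
        have hrx1v : (H.eulerSubgraph F).Reachable x1 (Sum.inl (vv i)) := by
          obtain ⟨p⟩ := hr1
          exact ⟨p.takeUntil _ (hall1 p)⟩
        have hry1v : (H.eulerSubgraph F).Reachable y1 (Sum.inl (vv i)) := hr1.symm.trans hrx1v
        have hz : ∃ z, z ≠ Sum.inl (vv i) ∧
            (H.eulerSubgraph F).Reachable (Sum.inl (vv i)) z ∧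
            (∃ s, (H.eulerSubgraph F).Adj z s) ∧
            ∀ t ∈ C.support, t ≠ Sum.inl (vv i) →
              ¬ Avoid (H.eulerSubgraph F) (Sum.inl (vv i)) z t := by
          rcases Classical.em (∀ t ∈ C.support, t ≠ Sum.inl (vv i) →
              ¬ Avoid (H.eulerSubgraph F) (Sum.inl (vv i)) x1 t) with hx' | hx'
          · exact ⟨x1, hx1, hrx1v.symm, exists_adj_of_reachable_ne hr1 hx1y1, hx'⟩
          · push_neg at hx'
            obtain ⟨t1, ht1m, ht1ne, ht1av⟩ := hx'
            refine ⟨y1, hy1, hry1v.symm,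
              exists_adj_of_reachable_ne hr1.symm hx1y1.symm, ?_⟩
            intro t2 ht2m ht2ne ht2av
            have hmid := cycle_avoid C hcyc (hmem i) ht1m ht2m ht1ne ht2ne
            exact hnoav1 (ht1av.trans (hmid.trans ht2av.symm))
        obtain ⟨z, hzv, hzr, hzadj, hzprop⟩ := hz
        obtain ⟨u0, hu0ne, hu0case⟩ := near_vertex z (Sum.inl (vv i)) hzadj hzv
        have hu0S : Avoid (H.eulerSubgraph F) (Sum.inl (vv i)) z (Sum.inl u0) := by
          rcases hu0case with heq | hadj
          · rw [heq]; exact avoid_refl hzv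
          · exact avoid_of_adj hadj (Ne.symm hzv) (Ne.symm hu0ne)
        set S : Set H.V :=
          {u : H.V | Avoid (H.eulerSubgraph F) (Sum.inl (vv i)) z (Sum.inl u)} with hSdef
        obtain ⟨w, hwS, hwmax⟩ := Set.exists_max_image S
          (fun u => (H.eulerSubgraph F).dist (Sum.inl (vv i)) (Sum.inl u))
          (Set.toFinite S) ⟨u0, hu0S⟩
        have hwav : Avoid (H.eulerSubgraph F) (Sum.inl (vv i)) z (Sum.inl w) := hwS
        have hSr : ∀ u ∈ S,
            (H.eulerSubgraph F).Reachable (Sum.inl (vv i)) (Sum.inl u) := by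
          intro u hu
          exact hzr.trans (Avoid.reachable hu)
        have hcl : ∀ u ∈ S, ∀ u' : H.V,
            (H.eulerSubgraph F).Reachable (Sum.inl (vv i)) (Sum.inl u') →
            ((Sum.inl u : H.V ⊕ H.E) = Sum.inl (vv i) ∨
              Avoid (H.eulerSubgraph F) (Sum.inl (vv i)) (Sum.inl u) (Sum.inl u')) →
            u' ∈ S := by
          intro u hu u' hru' hor
          rcases hor with heq | hav
          · exact absurd heq (Avoid.ne_right hu)
          · exact Avoid.trans hu hav
        have hwnc : ¬ IsCutVtx (H.eulerSubgraph F) (Sum.inl w) :=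
          noncut_of_max hSr hcl hwS hwmax
        have hwcomp : (H.eulerSubgraph F).connectedComponentMk (Sum.inl w) = c :=
          ((SimpleGraph.ConnectedComponent.eq).mpr (hSr w hwS).symm).trans (hcompv i)
        refine ⟨w, ⟨hwcomp, hwnc⟩, Or.inr ⟨hcut, ?_⟩⟩
        intro t htm htne hav
        exact hzprop t htm htne (Avoid.trans hwav hav)
      · exact ⟨vv i, ⟨hcompv i, hcut⟩, Or.inl ⟨hcut, rfl⟩⟩
    choose Φ hΦN hΦc using hsel2
    have hΦinj : Function.Injective Φ := by
      intro i j heq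
      by_contra hne
      have hvvne : vv i ≠ vv j := hvvinj i j hne
      have hvvne' : (Sum.inl (vv i) : H.V ⊕ H.E) ≠ Sum.inl (vv j) := by simpa using hvvne
      rcases hΦc i with ⟨hnci, hei⟩ | ⟨hci, hpi⟩ <;>
        rcases hΦc j with ⟨hncj, hej⟩ | ⟨hcj, hpj⟩
      · exact hvvne (by rw [← hei, ← hej, heq])
      · have h1 := hpj (Sum.inl (vv i)) (hmem i) hvvne'
        apply h1
        rw [← heq, hei]
        exact avoid_refl hvvne'
      · have h1 := hpi (Sum.inl (vv j)) (hmem j) hvvne'.symm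
        apply h1
        rw [heq, hej]
        exact avoid_refl hvvne'.symm
      · have hA : ¬ Avoid (H.eulerSubgraph F) (Sum.inl (vv i))
            (Sum.inl (Φ i)) (Sum.inl (vv j)) :=
          hpi (Sum.inl (vv j)) (hmem j) hvvne'.symm
        have hB : ¬ Avoid (H.eulerSubgraph F) (Sum.inl (vv j))
            (Sum.inl (Φ i)) (Sum.inl (vv i)) := by
          have h1 := hpj (Sum.inl (vv i)) (hmem i) hvvne'
          rwa [← heq] at h1
        have hru : (H.eulerSubgraph F).Reachable (Sum.inl (Φ i)) (Sum.inl (vv i)) :=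
          hreachC (hΦN i).1 (hcompv i)
        obtain ⟨p, hp⟩ := hru.exists_walk_length_eq_dist
        have h1 : Sum.inl (vv j) ∈ p.support := by
          by_contra hcon
          exact hB ⟨p, hcon⟩
        have h2 : Sum.inl (vv i) ∈ (p.takeUntil _ h1).support := by
          by_contra hcon
          exact hA ⟨p.takeUntil _ h1, hcon⟩
        have hd1 := length_take_drop p h1
        have hd2 := length_take_drop (p.takeUntil _ h1) h2
        have hdl : (H.eulerSubgraph F).dist (Sum.inl (Φ i)) (Sum.inl (vv i)) ≤
            ((p.takeUntil _ h1).takeUntil _ h2).length := SimpleGraph.dist_le _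
        have hg1 : 1 ≤ (p.dropUntil _ h1).length := length_pos_of_ne _ hvvne'.symm
        have hg2 : 1 ≤ ((p.takeUntil _ h1).dropUntil _ h2).length :=
          length_pos_of_ne _ hvvne'
        rw [← hp] at hdl
        omega
    have himg : (Finset.image Φ Finset.univ).card = k := by
      rw [Finset.card_image_of_injective _ hΦinj, Finset.card_univ, Fintype.card_fin]
    have hsub : ↑(Finset.image Φ Finset.univ) ⊆ N := by
      intro u hu
      simp only [Finset.coe_image, Set.mem_image, Finset.mem_coe] at hu
      obtain ⟨i, -, rfl⟩ := hu
      exact hΦN i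
    calc k = (↑(Finset.image Φ Finset.univ) : Set H.V).ncard := by
          rw [Set.ncard_coe_finset, himg]
      _ ≤ N.ncard := Set.ncard_le_ncard hsub (Set.toFinite N)
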